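/- In the setting of the second-order influence function statistic (X random element of S; Y, A bounded real random variables; b(X), p(X) versions of E[Y | σ(X)], E[A | σ(X)]; b̂, p̂, z̄ bounded measurable; Ω = E[z̄(X) z̄(X)ᵀ] invertible; O₁, …, Oₙ i.i.d. copies, n ≥ 2), define ψ̂₁ := (1/n) Σᵢ (Yᵢ − b̂(Xᵢ))(Aᵢ − p̂(Xᵢ)) and ψ̂₂ := ψ̂₁ − ÎF₂₂, where ÎF₂₂ := (1/(n(n−1))) Σ_{i₁ ≠ i₂} (Y_{i₁} − b̂(X_{i₁})) z̄(X_{i₁})ᵀ Ω⁻¹ z̄(X_{i₂}) (A_{i₂} − p̂(X_{i₂})). Then E[ψ̂₂] = E[(Y − b(X))(A − p(X))] + ⟨(I − Π)(b − b̂), (I − Π)(p − p̂)⟩, where Π is the orthogonal projection in L²(law of X) onto the span of z₁, …, z_k. That is, the bias of ψ̂₂ for ψ = E[cov(Y, A | X)] equals exactly the truncation bias cTB_{θ,k}(ψ̂₁). -/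

import Mathlib

open MeasureTheory Finset

private lemma integrable_of_ae_bdd {α : Type*} [MeasurableSpace α] {μ : Measure α}
    [IsFiniteMeasure μ] {f : α → ℝ} (hf : AEStronglyMeasurable f μ) {D : ℝ}
    (h : ∀ᵐ x ∂μ, |f x| ≤ D) : Integrable f μ :=
  (memLp_top_of_bound hf D (by simpa [Real.norm_eq_abs] using h)).integrable le_top

private lemma pi_eval_integral {Ω : Type*} [MeasurableSpace Ω] (P : Measure Ω)
    [IsProbabilityMeasure P] {n : ℕ} (i : Fin n) (f : Ω → ℝ) :
    ∫ ω : Fin n → Ω, f (ω i) ∂(Measure.pi fun _ => P) = ∫ ω, f ω ∂P := by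
  letI : MeasureSpace Ω := ⟨P⟩
  set F : Fin n → Ω → ℝ := fun t ω => if t = i then f ω else 1 with hF
  have h1 : ∀ x : Fin n → Ω, f (x i) = ∏ t, F t (x t) := by
    intro x
    rw [← Finset.mul_prod_erase Finset.univ (fun t => F t (x t)) (Finset.mem_univ i)]
    have h2 : ∏ t ∈ Finset.univ.erase i, F t (x t) = 1 :=
      Finset.prod_eq_one (fun t ht => by simp [hF, (Finset.mem_erase.1 ht).1])
    simp [h2, hF]
  have key := MeasureTheory.integral_fintype_prod_eq_prod (𝕜 := ℝ) (ι := Fin n)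
      (E := fun _ => Ω) (fun t => F t) (μ := fun _ => (volume : Measure Ω))
  simp_rw [← h1] at key
  rw [show (Measure.pi fun _ : Fin n => P) = (Measure.pi fun _ => (volume : Measure Ω)) from rfl, key]
  rw [← Finset.mul_prod_erase Finset.univ (fun t => ∫ x, F t x) (Finset.mem_univ i)]
  have h2 : ∏ t ∈ Finset.univ.erase i, ∫ x, F t x = 1 :=
    Finset.prod_eq_one (fun t ht => by simp [hF, (Finset.mem_erase.1 ht).1])
  rw [h2, mul_one]
  exact integral_congr_ae (Filter.Eventually.of_forall fun x => by simp [hF])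

private lemma pi_eval_integral_mul {Ω : Type*} [MeasurableSpace Ω] (P : Measure Ω)
    [IsProbabilityMeasure P] {n : ℕ} (i j : Fin n) (hij : i ≠ j) (f g : Ω → ℝ) :
    ∫ ω : Fin n → Ω, f (ω i) * g (ω j) ∂(Measure.pi fun _ => P)
      = (∫ ω, f ω ∂P) * ∫ ω, g ω ∂P := by
  letI : MeasureSpace Ω := ⟨P⟩
  set F : Fin n → Ω → ℝ := fun t ω => if t = i then f ω else if t = j then g ω else 1 with hF
  have hji : j ∈ Finset.univ.erase i := Finset.mem_erase.2 ⟨fun h => hij h.symm, Finset.mem_univ j⟩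
  have h1 : ∀ x : Fin n → Ω, f (x i) * g (x j) = ∏ t, F t (x t) := by
    intro x
    rw [← Finset.mul_prod_erase Finset.univ (fun t => F t (x t)) (Finset.mem_univ i),
        ← Finset.mul_prod_erase _ (fun t => F t (x t)) hji]
    have h2 : ∏ t ∈ (Finset.univ.erase i).erase j, F t (x t) = 1 :=
      Finset.prod_eq_one (fun t ht => by
        simp [hF, (Finset.mem_erase.1 ht).1, (Finset.mem_erase.1 (Finset.mem_erase.1 ht).2).1])
    rw [h2, mul_one]
    simp [hF, hij.symm]
  have key := MeasureTheory.integral_fintype_prod_eq_prod (𝕜 := ℝ) (ι := Fin n)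
      (E := fun _ => Ω) (fun t => F t) (μ := fun _ => (volume : Measure Ω))
  simp_rw [← h1] at key
  rw [show (Measure.pi fun _ : Fin n => P) = (Measure.pi fun _ => (volume : Measure Ω)) from rfl, key]
  rw [← Finset.mul_prod_erase Finset.univ (fun t => ∫ x, F t x) (Finset.mem_univ i),
      ← Finset.mul_prod_erase _ (fun t => ∫ x, F t x) hji]
  have h2 : ∏ t ∈ (Finset.univ.erase i).erase j, ∫ x, F t x = 1 :=
    Finset.prod_eq_one (fun t ht => by
      simp [hF, (Finset.mem_erase.1 ht).1, (Finset.mem_erase.1 (Finset.mem_erase.1 ht).2).1])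
  rw [h2, mul_one]
  congr 1 <;> exact integral_congr_ae (Filter.Eventually.of_forall fun x => by simp [hF, hij.symm])
private lemma condexp_pull {Ω S : Type*} [mΩ : MeasurableSpace Ω] [mS : MeasurableSpace S]
    (P : Measure Ω) [IsProbabilityMeasure P] (X : Ω → S) (hX : Measurable X)
    (W : Ω → ℝ) (hW : Measurable W) {CW : ℝ} (hWb : ∀ ω, |W ω| ≤ CW)
    (w : S → ℝ)
    (hwX : (fun ω => w (X ω)) =ᵐ[P] P[W | MeasurableSpace.comap X inferInstance])
    (h : S → ℝ) (hh : Measurable h) {D : ℝ} (hhD : ∀ᵐ ω ∂P, |h (X ω)| ≤ D) :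
    ∫ ω, W ω * h (X ω) ∂P = ∫ ω, w (X ω) * h (X ω) ∂P := by
  have hm : MeasurableSpace.comap X mS ≤ mΩ := hX.comap_le
  have hXm : Measurable[MeasurableSpace.comap X mS] X := Measurable.of_comap_le le_rfl
  have hhXm : Measurable[MeasurableSpace.comap X mS] fun ω => h (X ω) := hh.comp hXm
  have hhX : Measurable fun ω => h (X ω) := hh.comp hX
  have hWint : Integrable W P := integrable_of_ae_bdd hW.aestronglyMeasurable
    (Filter.Eventually.of_forall hWb)
  have hprod : Integrable ((fun ω => h (X ω)) * W) P := by
    apply integrable_of_ae_bdd ((hhX.mul hW).aestronglyMeasurable) (D := D * CW)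
    filter_upwards [hhD] with ω hω
    calc |h (X ω) * W ω| = |h (X ω)| * |W ω| := abs_mul _ _
      _ ≤ D * CW := mul_le_mul hω (hWb ω) (abs_nonneg _) ((abs_nonneg _).trans hω)
  have hpull := condExp_mul_of_stronglyMeasurable_left (μ := P) (m := MeasurableSpace.comap X mS)
    hhXm.stronglyMeasurable hprod hWint
  have step1 : ∫ ω, W ω * h (X ω) ∂P = ∫ ω, ((fun ω => h (X ω)) * W) ω ∂P := by
    simp [mul_comm]
  rw [step1, ← integral_condExp (f := (fun ω => h (X ω)) * W) hm]
  calc ∫ ω, (P[(fun ω => h (X ω)) * W|MeasurableSpace.comap X mS]) ω ∂P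
      = ∫ ω, ((fun ω => h (X ω)) * P[W|MeasurableSpace.comap X mS]) ω ∂P :=
        integral_congr_ae hpull
    _ = ∫ ω, w (X ω) * h (X ω) ∂P := by
        apply integral_congr_ae
        filter_upwards [hwX] with ω hω
        simp only [Pi.mul_apply, ← hω]
        ring
open scoped RealInnerProductSpace

private lemma gram_proj {E : Type*} [NormedAddCommGroup E] [InnerProductSpace ℝ E]
    {k : ℕ} (z : Fin k → E) (G : Matrix (Fin k) (Fin k) ℝ)
    (hG : ∀ i j, G i j = ⟪z i, z j⟫) (hGinv : IsUnit G)
    (K : Submodule ℝ E) (hK : K = Submodule.span ℝ (Set.range z)) [K.HasOrthogonalProjection]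
    (f g : E) :
    ⟪f - (K.orthogonalProjectionOnto f : E), g - (K.orthogonalProjectionOnto g : E)⟫
      = ⟪f, g⟫ - ∑ a, ∑ c, ⟪f, z a⟫ * G⁻¹ a c * ⟪z c, g⟫ := by
  have hdet : IsUnit G.det := (Matrix.isUnit_iff_isUnit_det G).1 hGinv
  set w : Fin k → ℝ := fun c => ⟪z c, g⟫ with hw
  set cv : Fin k → ℝ := G⁻¹.mulVec w with hcv
  have hPg : (K.orthogonalProjectionOnto g : E) = ∑ j, cv j • z j := by
    apply K.eq_starProjection_of_mem_of_inner_eq_zero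
    · rw [hK]
      exact Submodule.sum_mem _ fun j _ =>
        Submodule.smul_mem _ _ (Submodule.subset_span (Set.mem_range_self j))
    · intro u hu
      rw [hK] at hu
      induction hu using Submodule.span_induction with
      | mem x hx =>
        obtain ⟨i, rfl⟩ := hx
        rw [inner_sub_left, sub_eq_zero, sum_inner]
        have : ∀ j, ⟪cv j • z j, z i⟫ = G i j * cv j := by
          intro j
          rw [real_inner_smul_left, hG, real_inner_comm, mul_comm]
        rw [Finset.sum_congr rfl fun j _ => this j]
        have : ∑ j, G i j * cv j = G.mulVec cv i := rfl
        rw [this, hcv, Matrix.mulVec_mulVec, Matrix.mul_nonsing_inv _ hdet,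
          Matrix.one_mulVec]
        exact (real_inner_comm _ _)
      | zero => simp
      | add x y _ _ hx hy => rw [inner_add_right, hx, hy, add_zero]
      | smul a x _ hx => rw [real_inner_smul_right, hx, mul_zero]
  have hfK : f - (K.orthogonalProjectionOnto f : E) ∈ Kᗮ :=
    K.sub_starProjection_mem_orthogonal f
  have hgK : g - (K.orthogonalProjectionOnto g : E) ∈ Kᗮ :=
    K.sub_starProjection_mem_orthogonal g
  have h1 : ⟪f - (K.orthogonalProjectionOnto f : E), (K.orthogonalProjectionOnto g : E)⟫ = 0 :=
    (Submodule.mem_orthogonal' K _).1 hfK _ (K.orthogonalProjectionOnto g).2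
  have h2 : ⟪(K.orthogonalProjectionOnto f : E), g - (K.orthogonalProjectionOnto g : E)⟫ = 0 :=
    (Submodule.mem_orthogonal K _).1 hgK _ (K.orthogonalProjectionOnto f).2
  have h3 : ⟪f, (K.orthogonalProjectionOnto g : E)⟫
      = ∑ a, ∑ c, ⟪f, z a⟫ * G⁻¹ a c * ⟪z c, g⟫ := by
    rw [hPg, inner_sum]
    refine Finset.sum_congr rfl fun a _ => ?_
    rw [real_inner_smul_right, hcv]
    have : G⁻¹.mulVec w a = ∑ c, G⁻¹ a c * w c := rfl
    rw [this, Finset.sum_mul]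
    exact Finset.sum_congr rfl fun c _ => by ring
  have h1' : ⟪f, (K.orthogonalProjectionOnto g : E)⟫
      = ⟪(K.orthogonalProjectionOnto f : E), (K.orthogonalProjectionOnto g : E)⟫ := by
    rw [inner_sub_left] at h1; linarith
  have h2' : ⟪(K.orthogonalProjectionOnto f : E), g⟫
      = ⟪(K.orthogonalProjectionOnto f : E), (K.orthogonalProjectionOnto g : E)⟫ := by
    rw [inner_sub_right] at h2; linarith
  have e1 : ⟪f - (K.orthogonalProjectionOnto f : E), g - (K.orthogonalProjectionOnto g : E)⟫
      = ⟪f, g⟫ - ⟪f, (K.orthogonalProjectionOnto g : E)⟫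
        - ⟪(K.orthogonalProjectionOnto f : E), g⟫
        + ⟪(K.orthogonalProjectionOnto f : E), (K.orthogonalProjectionOnto g : E)⟫ := by
    rw [inner_sub_left, inner_sub_right, inner_sub_right]; ring
  rw [e1, ← h3]
  linarith
private lemma abs_mul_le' {a b ca cb : ℝ} (ha : |a| ≤ ca) (hb : |b| ≤ cb) : |a * b| ≤ ca * cb := by
  rw [abs_mul]; exact mul_le_mul ha hb (abs_nonneg _) ((abs_nonneg _).trans ha)

private lemma abs_sub_le' {a b ca cb : ℝ} (ha : |a| ≤ ca) (hb : |b| ≤ cb) : |a - b| ≤ ca + cb := by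
  calc |a - b| ≤ |a| + |b| := abs_sub _ _
    _ ≤ ca + cb := add_le_add ha hb

private lemma toLp_inner_eq {Ω S : Type*} [MeasurableSpace Ω] [MeasurableSpace S]
    (P : Measure Ω) (X : Ω → S) (hX : Measurable X)
    (f g : S → ℝ) (hfm : Measurable f) (hgm : Measurable g)
    (hf : MemLp f 2 (P.map X)) (hg : MemLp g 2 (P.map X)) :
    ⟪MemLp.toLp f hf, MemLp.toLp g hg⟫ = ∫ ω, f (X ω) * g (X ω) ∂P := by
  rw [MeasureTheory.L2.inner_def]
  calc ∫ a, ⟪(MemLp.toLp f hf) a, (MemLp.toLp g hg) a⟫ ∂(P.map X)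
      = ∫ a, f a * g a ∂(P.map X) := by
        apply integral_congr_ae
        filter_upwards [hf.coeFn_toLp, hg.coeFn_toLp] with a h1 h2
        rw [h1, h2, RCLike.inner_apply]
        simp
        ring
    _ = ∫ ω, f (X ω) * g (X ω) ∂P :=
        integral_map hX.aemeasurable ((hfm.mul hgm).aestronglyMeasurable)
theorem stmt5 {Ω S : Type*} [MeasurableSpace Ω] [MeasurableSpace S]
    (P : Measure Ω) [IsProbabilityMeasure P]
    (X : Ω → S) (hX : Measurable X)
    (Y A : Ω → ℝ) (hY : Measurable Y) (hA : Measurable A)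
    (C : ℝ) (hYb : ∀ ω, |Y ω| ≤ C) (hAb : ∀ ω, |A ω| ≤ C)
    (b p bh ph : S → ℝ) (hb : Measurable b) (hp : Measurable p)
    (hbh : Measurable bh) (hph : Measurable ph)
    (hbhB : ∀ s, |bh s| ≤ C) (hphB : ∀ s, |ph s| ≤ C)
    (hbX : (fun ω => b (X ω)) =ᵐ[P] P[Y | MeasurableSpace.comap X inferInstance])
    (hpX : (fun ω => p (X ω)) =ᵐ[P] P[A | MeasurableSpace.comap X inferInstance])
    {k : ℕ} (z : S → Fin k → ℝ) (hz : ∀ j, Measurable fun s => z s j)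
    (hzB : ∀ s j, |z s j| ≤ C)
    (G : Matrix (Fin k) (Fin k) ℝ)
    (hG : ∀ i j, G i j = ∫ ω, z (X ω) i * z (X ω) j ∂P)
    (hGinv : IsUnit G)
    (hfb : MemLp (fun s => b s - bh s) 2 (P.map X))
    (hfp : MemLp (fun s => p s - ph s) 2 (P.map X))
    (hzL : ∀ j, MemLp (fun s => z s j) 2 (P.map X))
    (K : Submodule ℝ (Lp ℝ 2 (P.map X)))
    (hK : K = Submodule.span ℝ (Set.range fun j : Fin k => MemLp.toLp _ (hzL j)))
    [K.HasOrthogonalProjection]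
    (n : ℕ) (hn : 2 ≤ n) :
    (∫ ω : Fin n → Ω,
        ((n : ℝ)⁻¹ * ∑ i : Fin n, (Y (ω i) - bh (X (ω i))) * (A (ω i) - ph (X (ω i)))
          - ((n : ℝ) * ((n : ℝ) - 1))⁻¹ *
              ∑ i₁ : Fin n, ∑ i₂ : Fin n,
                (if i₁ = i₂ then 0 else
                  (Y (ω i₁) - bh (X (ω i₁))) *
                    (∑ a, ∑ c, z (X (ω i₁)) a * G⁻¹ a c * z (X (ω i₂)) c) *
                    (A (ω i₂) - ph (X (ω i₂)))))
        ∂(Measure.pi fun _ : Fin n => P))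
      = (∫ ω, (Y ω - b (X ω)) * (A ω - p (X ω)) ∂P)
        + ⟪MemLp.toLp _ hfb - (K.orthogonalProjectionOnto (MemLp.toLp _ hfb) : Lp ℝ 2 (P.map X)),
            MemLp.toLp _ hfp - (K.orthogonalProjectionOnto (MemLp.toLp _ hfp) : Lp ℝ 2 (P.map X))⟫ := by
  -- basic bounds
  set C0 : ℝ := (C.toNNReal : ℝ) with hC0def
  have hCC0 : C ≤ C0 := Real.le_coe_toNNReal C
  have hC0 : (0 : ℝ) ≤ C0 := (C.toNNReal).coe_nonneg
  have hYb0 : ∀ ω, |Y ω| ≤ C0 := fun ω => (hYb ω).trans hCC0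
  have hAb0 : ∀ ω, |A ω| ≤ C0 := fun ω => (hAb ω).trans hCC0
  have hbhB0 : ∀ s, |bh s| ≤ C0 := fun s => (hbhB s).trans hCC0
  have hphB0 : ∀ s, |ph s| ≤ C0 := fun s => (hphB s).trans hCC0
  have hzB0 : ∀ s j, |z s j| ≤ C0 := fun s j => (hzB s j).trans hCC0
  have hbB : ∀ᵐ ω ∂P, |b (X ω)| ≤ C0 := by
    have h1 : ∀ᵐ ω ∂P, |Y ω| ≤ (C.toNNReal : ℝ) := Filter.Eventually.of_forall hYb0
    have h2 := ae_bdd_condExp_of_ae_bdd (m := MeasurableSpace.comap X inferInstance)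
      (R := C.toNNReal) h1
    filter_upwards [hbX, h2] with ω hω h2ω
    rw [hω]; exact h2ω
  have hpB : ∀ᵐ ω ∂P, |p (X ω)| ≤ C0 := by
    have h1 : ∀ᵐ ω ∂P, |A ω| ≤ (C.toNNReal : ℝ) := Filter.Eventually.of_forall hAb0
    have h2 := ae_bdd_condExp_of_ae_bdd (m := MeasurableSpace.comap X inferInstance)
      (R := C.toNNReal) h1
    filter_upwards [hpX, h2] with ω hω h2ω
    rw [hω]; exact h2ω
  have hfbB : ∀ᵐ ω ∂P, |b (X ω) - bh (X ω)| ≤ C0 + C0 := by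
    filter_upwards [hbB] with ω hω; exact abs_sub_le' hω (hbhB0 _)
  have hfpB : ∀ᵐ ω ∂P, |p (X ω) - ph (X ω)| ≤ C0 + C0 := by
    filter_upwards [hpB] with ω hω; exact abs_sub_le' hω (hphB0 _)
  have hYbh : ∀ ω, |Y ω - bh (X ω)| ≤ C0 + C0 := fun ω => abs_sub_le' (hYb0 ω) (hbhB0 _)
  have hAph : ∀ ω, |A ω - ph (X ω)| ≤ C0 + C0 := fun ω => abs_sub_le' (hAb0 ω) (hphB0 _)
  -- measurability
  have hYm : Measurable fun ω => Y ω - bh (X ω) := hY.sub (hbh.comp hX)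
  have hAm : Measurable fun ω => A ω - ph (X ω) := hA.sub (hph.comp hX)
  have hum : Measurable fun ω => (Y ω - bh (X ω)) * (A ω - ph (X ω)) := hYm.mul hAm
  have hvam : ∀ a, Measurable fun ω => (Y ω - bh (X ω)) * z (X ω) a :=
    fun a => hYm.mul ((hz a).comp hX)
  have hwcm : ∀ c, Measurable fun ω => z (X ω) c * (A ω - ph (X ω)) :=
    fun c => ((hz c).comp hX).mul hAm
  -- the main scalar quantities
  set I₁ : ℝ := ∫ ω, (Y ω - bh (X ω)) * (A ω - ph (X ω)) ∂P with hI₁def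
  set T : ℝ := ∑ a, ∑ c, (∫ ω, (Y ω - bh (X ω)) * z (X ω) a ∂P) * G⁻¹ a c *
      (∫ ω, z (X ω) c * (A ω - ph (X ω)) ∂P) with hTdef
  -- Part 1 : the LHS equals I₁ - T
  have part1 : (∫ ω : Fin n → Ω,
        ((n : ℝ)⁻¹ * ∑ i : Fin n, (Y (ω i) - bh (X (ω i))) * (A (ω i) - ph (X (ω i)))
          - ((n : ℝ) * ((n : ℝ) - 1))⁻¹ *
              ∑ i₁ : Fin n, ∑ i₂ : Fin n,
                (if i₁ = i₂ then 0 else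
                  (Y (ω i₁) - bh (X (ω i₁))) *
                    (∑ a, ∑ c, z (X (ω i₁)) a * G⁻¹ a c * z (X (ω i₂)) c) *
                    (A (ω i₂) - ph (X (ω i₂)))))
        ∂(Measure.pi fun _ : Fin n => P)) = I₁ - T := by
    have hpi : IsProbabilityMeasure (Measure.pi fun _ : Fin n => P) := inferInstance
    have hn2 : (2:ℝ) ≤ (n:ℝ) := by exact_mod_cast hn
    have hn0 : (n:ℝ) ≠ 0 := by positivity
    have hn1 : (n:ℝ) - 1 ≠ 0 := by intro h; nlinarith
    have hT1i : ∀ i : Fin n, Integrable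
        (fun ω : Fin n → Ω => (Y (ω i) - bh (X (ω i))) * (A (ω i) - ph (X (ω i))))
        (Measure.pi fun _ : Fin n => P) := by
      intro i
      apply integrable_of_ae_bdd (Measurable.aestronglyMeasurable
        (hum.comp (measurable_pi_apply i))) (D := (C0 + C0) * (C0 + C0))
      exact Filter.Eventually.of_forall fun ω => abs_mul_le' (hYbh _) (hAph _)
    have big_rw : ∀ (i₁ i₂ : Fin n) (ω : Fin n → Ω),
        (Y (ω i₁) - bh (X (ω i₁))) *
            (∑ a, ∑ c, z (X (ω i₁)) a * G⁻¹ a c * z (X (ω i₂)) c) *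
            (A (ω i₂) - ph (X (ω i₂)))
        = ∑ a, ∑ c, G⁻¹ a c * (((Y (ω i₁) - bh (X (ω i₁))) * z (X (ω i₁)) a) *
            (z (X (ω i₂)) c * (A (ω i₂) - ph (X (ω i₂))))) := by
      intro i₁ i₂ ω
      simp only [Finset.mul_sum, Finset.sum_mul]
      exact Finset.sum_congr rfl fun a _ => Finset.sum_congr rfl fun c _ => by ring
    have helem_int : ∀ (i₁ i₂ : Fin n) (a c : Fin k), Integrable
        (fun ω : Fin n → Ω => G⁻¹ a c * (((Y (ω i₁) - bh (X (ω i₁))) * z (X (ω i₁)) a) *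
          (z (X (ω i₂)) c * (A (ω i₂) - ph (X (ω i₂))))))
        (Measure.pi fun _ : Fin n => P) := by
      intro i₁ i₂ a c
      apply Integrable.const_mul
      apply integrable_of_ae_bdd (Measurable.aestronglyMeasurable
        (((hvam a).comp (measurable_pi_apply i₁)).mul
          ((hwcm c).comp (measurable_pi_apply i₂))))
        (D := ((C0 + C0) * C0) * (C0 * (C0 + C0)))
      exact Filter.Eventually.of_forall fun ω =>
        abs_mul_le' (abs_mul_le' (hYbh _) (hzB0 _ a)) (abs_mul_le' (hzB0 _ c) (hAph _))
    have helem_val : ∀ (i₁ i₂ : Fin n), i₁ ≠ i₂ → ∀ (a c : Fin k),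
        (∫ ω : Fin n → Ω, G⁻¹ a c * (((Y (ω i₁) - bh (X (ω i₁))) * z (X (ω i₁)) a) *
          (z (X (ω i₂)) c * (A (ω i₂) - ph (X (ω i₂))))) ∂(Measure.pi fun _ : Fin n => P))
        = (∫ ω, (Y ω - bh (X ω)) * z (X ω) a ∂P) * G⁻¹ a c *
            (∫ ω, z (X ω) c * (A ω - ph (X ω)) ∂P) := by
      intro i₁ i₂ hij a c
      rw [integral_const_mul]
      have := pi_eval_integral_mul P i₁ i₂ hij
        (fun ω' => (Y ω' - bh (X ω')) * z (X ω') a)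
        (fun ω' => z (X ω') c * (A ω' - ph (X ω')))
      rw [this]
      ring
    have hterm_int : ∀ i₁ i₂ : Fin n, Integrable
        (fun ω : Fin n → Ω => if i₁ = i₂ then (0:ℝ) else
          (Y (ω i₁) - bh (X (ω i₁))) *
            (∑ a, ∑ c, z (X (ω i₁)) a * G⁻¹ a c * z (X (ω i₂)) c) *
            (A (ω i₂) - ph (X (ω i₂)))) (Measure.pi fun _ : Fin n => P) := by
      intro i₁ i₂
      by_cases h : i₁ = i₂
      · simp only [if_pos h]
        exact integrable_const 0
      · simp only [if_neg h]
        have : (fun ω : Fin n → Ω =>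
            (Y (ω i₁) - bh (X (ω i₁))) *
              (∑ a, ∑ c, z (X (ω i₁)) a * G⁻¹ a c * z (X (ω i₂)) c) *
              (A (ω i₂) - ph (X (ω i₂))))
            = fun ω => ∑ a, ∑ c, G⁻¹ a c * (((Y (ω i₁) - bh (X (ω i₁))) * z (X (ω i₁)) a) *
              (z (X (ω i₂)) c * (A (ω i₂) - ph (X (ω i₂))))) := funext (big_rw i₁ i₂)
        rw [this]
        exact integrable_finset_sum _ fun a _ =>
          integrable_finset_sum _ fun c _ => helem_int i₁ i₂ a c
    have hterm_val : ∀ i₁ i₂ : Fin n,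
        (∫ ω : Fin n → Ω, (if i₁ = i₂ then (0:ℝ) else
          (Y (ω i₁) - bh (X (ω i₁))) *
            (∑ a, ∑ c, z (X (ω i₁)) a * G⁻¹ a c * z (X (ω i₂)) c) *
            (A (ω i₂) - ph (X (ω i₂)))) ∂(Measure.pi fun _ : Fin n => P))
        = if i₁ = i₂ then 0 else T := by
      intro i₁ i₂
      by_cases h : i₁ = i₂
      · simp [h]
      · simp only [if_neg h]
        simp only [big_rw i₁ i₂]
        rw [integral_finset_sum _ (fun a _ =>
          integrable_finset_sum _ fun c _ => helem_int i₁ i₂ a c), hTdef]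
        refine Finset.sum_congr rfl fun a _ => ?_
        rw [integral_finset_sum _ (fun c _ => helem_int i₁ i₂ a c)]
        exact Finset.sum_congr rfl fun c _ => helem_val i₁ i₂ h a c
    have hA1 : Integrable (fun ω : Fin n → Ω =>
        (n : ℝ)⁻¹ * ∑ i : Fin n, (Y (ω i) - bh (X (ω i))) * (A (ω i) - ph (X (ω i))))
        (Measure.pi fun _ : Fin n => P) :=
      (integrable_finset_sum _ fun i _ => hT1i i).const_mul _
    have hA2 : Integrable (fun ω : Fin n → Ω =>
        ((n : ℝ) * ((n : ℝ) - 1))⁻¹ * ∑ i₁ : Fin n, ∑ i₂ : Fin n,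
          (if i₁ = i₂ then (0:ℝ) else
            (Y (ω i₁) - bh (X (ω i₁))) *
              (∑ a, ∑ c, z (X (ω i₁)) a * G⁻¹ a c * z (X (ω i₂)) c) *
              (A (ω i₂) - ph (X (ω i₂)))))
        (Measure.pi fun _ : Fin n => P) :=
      (integrable_finset_sum _ fun i₁ _ =>
        integrable_finset_sum _ fun i₂ _ => hterm_int i₁ i₂).const_mul _
    have e1 : ∀ i : Fin n,
        (∫ ω : Fin n → Ω, (Y (ω i) - bh (X (ω i))) * (A (ω i) - ph (X (ω i)))
          ∂(Measure.pi fun _ : Fin n => P)) = I₁ :=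
      fun i => pi_eval_integral P i (fun ω' => (Y ω' - bh (X ω')) * (A ω' - ph (X ω')))
    have e2 : ∀ i₁ : Fin n,
        (∫ ω : Fin n → Ω, ∑ i₂ : Fin n, (if i₁ = i₂ then (0:ℝ) else
          (Y (ω i₁) - bh (X (ω i₁))) *
            (∑ a, ∑ c, z (X (ω i₁)) a * G⁻¹ a c * z (X (ω i₂)) c) *
            (A (ω i₂) - ph (X (ω i₂)))) ∂(Measure.pi fun _ : Fin n => P))
        = (n : ℝ) * T - T := by
      intro i₁
      rw [integral_finset_sum _ (fun i₂ _ => hterm_int i₁ i₂),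
        Finset.sum_congr rfl fun i₂ _ => hterm_val i₁ i₂]
      have : ∀ i₂ : Fin n, (if i₁ = i₂ then (0:ℝ) else T)
          = T - (if i₁ = i₂ then T else 0) := by
        intro i₂; by_cases h : i₁ = i₂ <;> simp [h]
      rw [Finset.sum_congr rfl fun i₂ _ => this i₂, Finset.sum_sub_distrib,
        Finset.sum_const, Finset.sum_ite_eq, Finset.card_univ, Fintype.card_fin,
        nsmul_eq_mul]
      simp
    rw [integral_sub hA1 hA2, integral_const_mul, integral_const_mul,
      integral_finset_sum _ (fun i _ => hT1i i),
      integral_finset_sum _ (fun i₁ _ =>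
        integrable_finset_sum _ fun i₂ _ => hterm_int i₁ i₂)]
    simp only [e1, e2, Finset.sum_const, Finset.card_univ, Fintype.card_fin,
      nsmul_eq_mul]
    field_simp

  -- Part 2 : I₁ = ψ + ∫ (b-bh)(p-ph)
  have part2 : I₁ = (∫ ω, (Y ω - b (X ω)) * (A ω - p (X ω)) ∂P)
      + ∫ ω, (b (X ω) - bh (X ω)) * (p (X ω) - ph (X ω)) ∂P := by
    have hg1 : Integrable (fun ω => (Y ω - b (X ω)) * (A ω - p (X ω))) P := by
      apply integrable_of_ae_bdd ((hY.sub (hb.comp hX)).mul (hA.sub (hp.comp hX))).aestronglyMeasurable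
        (D := (C0 + C0) * (C0 + C0))
      filter_upwards [hbB, hpB] with ω h1 h2
      exact abs_mul_le' (abs_sub_le' (hYb0 ω) h1) (abs_sub_le' (hAb0 ω) h2)
    have hg2 : Integrable (fun ω => (b (X ω) - bh (X ω)) * (p (X ω) - ph (X ω))) P := by
      apply integrable_of_ae_bdd (((hb.comp hX).sub (hbh.comp hX)).mul
        ((hp.comp hX).sub (hph.comp hX))).aestronglyMeasurable (D := (C0 + C0) * (C0 + C0))
      filter_upwards [hfbB, hfpB] with ω h1 h2
      exact abs_mul_le' h1 h2
    have hg3a : Integrable (fun ω => Y ω * (p (X ω) - ph (X ω))) P := by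
      apply integrable_of_ae_bdd (hY.mul ((hp.comp hX).sub (hph.comp hX))).aestronglyMeasurable
        (D := C0 * (C0 + C0))
      filter_upwards [hfpB] with ω h1
      exact abs_mul_le' (hYb0 ω) h1
    have hg3b : Integrable (fun ω => b (X ω) * (p (X ω) - ph (X ω))) P := by
      apply integrable_of_ae_bdd ((hb.comp hX).mul
        ((hp.comp hX).sub (hph.comp hX))).aestronglyMeasurable (D := C0 * (C0 + C0))
      filter_upwards [hfpB, hbB] with ω h1 h2
      exact abs_mul_le' h2 h1
    have hg4a : Integrable (fun ω => A ω * (b (X ω) - bh (X ω))) P := by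
      apply integrable_of_ae_bdd (hA.mul ((hb.comp hX).sub (hbh.comp hX))).aestronglyMeasurable
        (D := C0 * (C0 + C0))
      filter_upwards [hfbB] with ω h1
      exact abs_mul_le' (hAb0 ω) h1
    have hg4b : Integrable (fun ω => p (X ω) * (b (X ω) - bh (X ω))) P := by
      apply integrable_of_ae_bdd ((hp.comp hX).mul
        ((hb.comp hX).sub (hbh.comp hX))).aestronglyMeasurable (D := C0 * (C0 + C0))
      filter_upwards [hfbB, hpB] with ω h1 h2
      exact abs_mul_le' h2 h1
    have z1 : ∫ ω, Y ω * (p (X ω) - ph (X ω)) ∂P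
        = ∫ ω, b (X ω) * (p (X ω) - ph (X ω)) ∂P :=
      condexp_pull P X hX Y hY hYb0 b hbX (fun s => p s - ph s) (hp.sub hph) hfpB
    have z2 : ∫ ω, A ω * (b (X ω) - bh (X ω)) ∂P
        = ∫ ω, p (X ω) * (b (X ω) - bh (X ω)) ∂P :=
      condexp_pull P X hX A hA hAb0 p hpX (fun s => b s - bh s) (hb.sub hbh) hfbB
    have hdecomp : (fun ω => (Y ω - bh (X ω)) * (A ω - ph (X ω))) =
        ((fun ω => (Y ω - b (X ω)) * (A ω - p (X ω)))
          + fun ω => (b (X ω) - bh (X ω)) * (p (X ω) - ph (X ω)))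
        + (((fun ω => Y ω * (p (X ω) - ph (X ω)))
              - fun ω => b (X ω) * (p (X ω) - ph (X ω)))
          + ((fun ω => A ω * (b (X ω) - bh (X ω)))
              - fun ω => p (X ω) * (b (X ω) - bh (X ω)))) := by
      funext ω
      simp only [Pi.add_apply, Pi.sub_apply]
      ring
    rw [hI₁def, hdecomp, integral_add' (hg1.add hg2) ((hg3a.sub hg3b).add (hg4a.sub hg4b)),
      integral_add' hg1 hg2, integral_add' (hg3a.sub hg3b) (hg4a.sub hg4b),
      integral_sub' hg3a hg3b, integral_sub' hg4a hg4b, z1, z2]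
    ring

  -- Part 3 : identify the inner products
  have part3a : ∫ ω, (b (X ω) - bh (X ω)) * (p (X ω) - ph (X ω)) ∂P
      = ⟪MemLp.toLp _ hfb, MemLp.toLp _ hfp⟫ :=
    (toLp_inner_eq P X hX _ _ (hb.sub hbh) (hp.sub hph) hfb hfp).symm
  have part3b : ∀ a : Fin k, ∫ ω, (Y ω - bh (X ω)) * z (X ω) a ∂P
      = ⟪MemLp.toLp _ hfb, MemLp.toLp _ (hzL a)⟫ := by
    intro a
    have hza : ∀ᵐ ω ∂P, |z (X ω) a| ≤ C0 := Filter.Eventually.of_forall fun ω => hzB0 _ a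
    have hia : Integrable (fun ω => Y ω * z (X ω) a) P := by
      apply integrable_of_ae_bdd (hY.mul ((hz a).comp hX)).aestronglyMeasurable (D := C0 * C0)
      exact Filter.Eventually.of_forall fun ω => abs_mul_le' (hYb0 ω) (hzB0 _ a)
    have hib : Integrable (fun ω => bh (X ω) * z (X ω) a) P := by
      apply integrable_of_ae_bdd ((hbh.comp hX).mul ((hz a).comp hX)).aestronglyMeasurable
        (D := C0 * C0)
      exact Filter.Eventually.of_forall fun ω => abs_mul_le' (hbhB0 _) (hzB0 _ a)
    have hic : Integrable (fun ω => b (X ω) * z (X ω) a) P := by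
      apply integrable_of_ae_bdd ((hb.comp hX).mul ((hz a).comp hX)).aestronglyMeasurable
        (D := C0 * C0)
      filter_upwards [hbB] with ω h1
      exact abs_mul_le' h1 (hzB0 _ a)
    have hpull : ∫ ω, Y ω * z (X ω) a ∂P = ∫ ω, b (X ω) * z (X ω) a ∂P :=
      condexp_pull P X hX Y hY hYb0 b hbX (fun s => z s a) (hz a) hza
    have e1 : (fun ω => (Y ω - bh (X ω)) * z (X ω) a) =
        (fun ω => Y ω * z (X ω) a) - fun ω => bh (X ω) * z (X ω) a := by
      funext ω; simp only [Pi.sub_apply]; ring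
    have e2 : (fun ω => (b (X ω) - bh (X ω)) * z (X ω) a) =
        (fun ω => b (X ω) * z (X ω) a) - fun ω => bh (X ω) * z (X ω) a := by
      funext ω; simp only [Pi.sub_apply]; ring
    rw [toLp_inner_eq P X hX (fun s => b s - bh s) _ (hb.sub hbh) (hz a) hfb (hzL a), e1, e2,
      integral_sub' hia hib, integral_sub' hic hib, hpull]
  have part3c : ∀ c : Fin k, ∫ ω, z (X ω) c * (A ω - ph (X ω)) ∂P
      = ⟪MemLp.toLp _ (hzL c), MemLp.toLp _ hfp⟫ := by
    intro c
    have hzc : ∀ᵐ ω ∂P, |z (X ω) c| ≤ C0 := Filter.Eventually.of_forall fun ω => hzB0 _ c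
    have hia : Integrable (fun ω => A ω * z (X ω) c) P := by
      apply integrable_of_ae_bdd (hA.mul ((hz c).comp hX)).aestronglyMeasurable (D := C0 * C0)
      exact Filter.Eventually.of_forall fun ω => abs_mul_le' (hAb0 ω) (hzB0 _ c)
    have hib : Integrable (fun ω => ph (X ω) * z (X ω) c) P := by
      apply integrable_of_ae_bdd ((hph.comp hX).mul ((hz c).comp hX)).aestronglyMeasurable
        (D := C0 * C0)
      exact Filter.Eventually.of_forall fun ω => abs_mul_le' (hphB0 _) (hzB0 _ c)
    have hic : Integrable (fun ω => p (X ω) * z (X ω) c) P := by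
      apply integrable_of_ae_bdd ((hp.comp hX).mul ((hz c).comp hX)).aestronglyMeasurable
        (D := C0 * C0)
      filter_upwards [hpB] with ω h1
      exact abs_mul_le' h1 (hzB0 _ c)
    have hpull : ∫ ω, A ω * z (X ω) c ∂P = ∫ ω, p (X ω) * z (X ω) c ∂P :=
      condexp_pull P X hX A hA hAb0 p hpX (fun s => z s c) (hz c) hzc
    have e1 : (fun ω => z (X ω) c * (A ω - ph (X ω))) =
        (fun ω => A ω * z (X ω) c) - fun ω => ph (X ω) * z (X ω) c := by
      funext ω; simp only [Pi.sub_apply]; ring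
    have e2 : (fun ω => z (X ω) c * (p (X ω) - ph (X ω))) =
        (fun ω => p (X ω) * z (X ω) c) - fun ω => ph (X ω) * z (X ω) c := by
      funext ω; simp only [Pi.sub_apply]; ring
    rw [toLp_inner_eq P X hX _ (fun s => p s - ph s) (hz c) (hp.sub hph) (hzL c) hfp, e1, e2,
      integral_sub' hia hib, integral_sub' hic hib, hpull]
  -- Part 4 : Gram identity
  have part4 := gram_proj (fun j : Fin k => MemLp.toLp _ (hzL j)) G
    (fun i j => by rw [hG, toLp_inner_eq P X hX _ _ (hz i) (hz j)]) hGinv K hK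
    (MemLp.toLp _ hfb) (MemLp.toLp _ hfp)
  rw [part1, part2]
  have hT : T = ∑ a, ∑ c, ⟪MemLp.toLp _ hfb, MemLp.toLp _ (hzL a)⟫ * G⁻¹ a c *
      ⟪MemLp.toLp _ (hzL c), MemLp.toLp _ hfp⟫ := by
    rw [hTdef]
    exact Finset.sum_congr rfl fun a _ => Finset.sum_congr rfl fun c _ => by
      rw [part3b a, part3c c]
  rw [hT, part3a, part4]
  ring
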